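/- Let f₁, f₂, …, f_s be integer polynomials, not all zero, and let f be a primitive integer polynomial that is a greatest common divisor of f₁, …, f_s in ℚ[X]. Then there exists a positive integer m such that for every integer x there is a positive divisor d of m with gcd(f₁(x), f₂(x), …, f_s(x)) = d · |f(x)|, except that when f(x) = 0 the gcd is 0. -/

import Mathlib

open Polynomial

/-- If `f` is a primitive integer polynomial which is a greatest common divisor in
`ℚ[X]` of the integer polynomials `f₁, …, f_s` (not all zero), then there is a
positive integer `m` such that for every integer `x` there is a positive divisor
`d` of `m` with `gcd(f₁(x), …, f_s(x)) = d·|f(x)|` (when `f(x) = 0` the gcd is `0`). -/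
theorem gcd_values_eq_divisor_mul_abs (s : ℕ) (f : Fin s → Polynomial ℤ)
    (hne : ∃ i, f i ≠ 0) (F : Polynomial ℤ) (hprim : F.IsPrimitive)
    (hdvd : ∀ i, F.map (Int.castRingHom ℚ) ∣ (f i).map (Int.castRingHom ℚ))
    (hgcd : ∀ D : Polynomial ℚ, (∀ i, D ∣ (f i).map (Int.castRingHom ℚ)) →
      D ∣ F.map (Int.castRingHom ℚ)) :
    ∃ m : ℤ, 0 < m ∧ ∀ x : ℤ,
      (F.eval x = 0 → (Finset.univ.gcd fun i => (f i).eval x) = 0) ∧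
      ∃ d : ℤ, 0 < d ∧ d ∣ m ∧
        (Finset.univ.gcd fun i => (f i).eval x) = d * |F.eval x| := by
  classical
  set φ := Int.castRingHom ℚ with hφ
  have hinj : Function.Injective φ := Int.cast_injective
  have hmapinj : Function.Injective (Polynomial.map φ) :=
    Polynomial.map_injective φ hinj
  -- F ∣ f i in ℤ[X]
  have hFdvd : ∀ i, F ∣ f i := by
    intro i
    by_cases h0 : f i = 0
    · simp [h0]
    · have hc : ((f i).content : ℚ) ≠ 0 := by
        exact Int.cast_ne_zero.mpr fun h => h0 (Polynomial.content_eq_zero_iff.mp h)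
      have heq : (f i).map φ = C ((f i).content : ℚ) * ((f i).primPart.map φ) := by
        conv_lhs => rw [(f i).eq_C_content_mul_primPart]
        rw [Polynomial.map_mul, Polynomial.map_C]
        rfl
      have h3 : C (((f i).content : ℚ)⁻¹) * ((f i).map φ) = (f i).primPart.map φ := by
        rw [heq, ← mul_assoc, ← C_mul, inv_mul_cancel₀ hc, C_1, one_mul]
      have h4 : F.map φ ∣ (f i).primPart.map φ := by
        rw [← h3]; exact (hdvd i).mul_left _
      exact ((hprim.dvd_of_fraction_map_dvd_fraction_map h4)).trans
        (f i).primPart_dvd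
  obtain ⟨g, hg⟩ : ∃ g : Fin s → Polynomial ℤ, ∀ i, f i = F * g i :=
    ⟨fun i => (hFdvd i).choose, fun i => (hFdvd i).choose_spec⟩
  -- F ≠ 0
  obtain ⟨i0, hi0⟩ := hne
  have hF0 : F ≠ 0 := hprim.ne_zero
  have hFm0 : F.map φ ≠ 0 := fun h => hF0 (hmapinj (by simpa using h))
  -- the ideal generated by the g i maps is everything
  set I : Ideal (Polynomial ℚ) := Ideal.span (Set.range fun i => (g i).map φ) with hI
  have hIone : (1 : Polynomial ℚ) ∈ I := by
    have hgen : ∀ i, Submodule.IsPrincipal.generator I ∣ (g i).map φ := by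
      intro i
      rw [← Submodule.IsPrincipal.mem_iff_generator_dvd]
      exact Ideal.subset_span ⟨i, rfl⟩
    have hDF : Submodule.IsPrincipal.generator I * F.map φ ∣ F.map φ := by
      apply hgcd
      intro i
      rw [hg i, Polynomial.map_mul]
      exact mul_comm (Submodule.IsPrincipal.generator I) (F.map φ) ▸
        mul_dvd_mul_left (F.map φ) (hgen i)
    have : Submodule.IsPrincipal.generator I ∣ 1 :=
      (mul_dvd_mul_iff_right hFm0).mp
        (show _ * F.map φ ∣ 1 * F.map φ by rw [one_mul]; exact hDF)
    have hu : IsUnit (Submodule.IsPrincipal.generator I) := isUnit_of_dvd_one this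
    have : I = ⊤ := Ideal.eq_top_of_isUnit_mem I (Submodule.IsPrincipal.generator_mem I) hu
    simp [this]
  obtain ⟨c, hc⟩ : ∃ c : Fin s → Polynomial ℚ, ∑ i, c i • (g i).map φ = 1 := by
    rw [hI, Ideal.span] at hIone
    exact (Submodule.mem_span_range_iff_exists_fun _).mp hIone
  -- clear denominators
  have hbex : ∀ i, ∃ b : ℤ, b ≠ 0 ∧
      (IsLocalization.integerNormalization (nonZeroDivisors ℤ) (c i)).map φ = (b : ℤ) • c i := by
    intro i
    obtain ⟨b, hb⟩ := IsLocalization.integerNormalization_map_to_map (nonZeroDivisors ℤ) (c i)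
    exact ⟨(b : ℤ), nonZeroDivisors.coe_ne_zero b, by simpa using hb⟩
  choose b hb0 hb using hbex
  set n : ℤ := ∏ i, b i with hn
  have hn0 : n ≠ 0 := Finset.prod_ne_zero_iff.mpr fun i _ => hb0 i
  set E : Fin s → Polynomial ℤ := fun i =>
    C (∏ j ∈ Finset.univ.erase i, b j) *
      IsLocalization.integerNormalization (nonZeroDivisors ℤ) (c i) * g i with hE
  have hsum : ∑ i, E i = C n := by
    apply hmapinj
    rw [Polynomial.map_sum, Polynomial.map_C]
    have : ∀ i, (E i).map φ = C ((n : ℤ) : ℚ) * (c i • (g i).map φ) := by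
      intro i
      rw [hE]
      simp only [Polynomial.map_mul, Polynomial.map_C, hb i]
      simp only [Polynomial.map_mul, Polynomial.map_C, hb i, smul_eq_mul, zsmul_eq_mul, hφ,
        Int.coe_castRingHom, hn, ← Finset.mul_prod_erase Finset.univ b (Finset.mem_univ i)]
      push_cast
      rw [C_mul, C_eq_intCast]
      ring
    rw [Finset.sum_congr rfl fun i _ => this i, ← Finset.mul_sum, hc, mul_one]
    simp [hφ]
  refine ⟨|n|, abs_pos.mpr hn0, fun x => ?_⟩
  set d : ℤ := Finset.univ.gcd fun i => (g i).eval x with hd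
  have hdn : d ∣ n := by
    have := congrArg (Polynomial.eval x) hsum
    rw [Polynomial.eval_finset_sum, Polynomial.eval_C] at this
    rw [← this]
    apply Finset.dvd_sum
    intro i _
    rw [hE]
    simp only [Polynomial.eval_mul]
    exact (Finset.gcd_dvd (Finset.mem_univ i)).mul_left _
  have hd0 : d ≠ 0 := fun h => hn0 (by simpa [h] using hdn)
  have hdnn : 0 ≤ d := by
    have := Finset.normalize_gcd (s := Finset.univ) (f := fun i => (g i).eval x)
    rw [← hd] at this
    rw [← this, ← Int.abs_eq_normalize]
    exact abs_nonneg d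
  have hmain : (Finset.univ.gcd fun i => (f i).eval x) = d * |F.eval x| := by
    have : (fun i => (f i).eval x) = fun i => F.eval x * (g i).eval x := by
      funext i; rw [hg i, Polynomial.eval_mul]
    rw [this, Finset.gcd_mul_left, ← Int.abs_eq_normalize, mul_comm]
  exact ⟨fun hFx => by rw [hmain, hFx]; simp,
    d, lt_of_le_of_ne hdnn (Ne.symm hd0), hdn.trans (self_dvd_abs n), hmain⟩
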